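/- For every dimension d ≥ 1 there exists a finite constant C = C(d) such that for any ℓ ∈ ℕ there exists a flow ψ̃^ℓ in ℤ^d, supported in Λ_ℓ, connecting the point mass at the origin to the uniform measure p_ℓ on Λ_ℓ, and satisfying Σ_{x∈Λ_ℓ, b∈B} ψ̃^ℓ(x;b)² ≤ C g_d(ℓ) and Σ_{x∈Λ_ℓ, b∈B} |ψ̃^ℓ(x;b)| ≤ C ℓ. -/

import Mathlib

open Finset Real

/-- The canonical basis vector `e_i` of `ℤ^d`. -/
def eZ (d : ℕ) (i : Fin d) : Fin d → ℤ := fun j => if j = i then 1 else 0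

/-- The cube `Λ_ℓ = {z ∈ ℤ^d : 0 ≤ z_i ≤ ℓ-1}`. -/
noncomputable def Lam (d ℓ : ℕ) : Finset (Fin d → ℤ) := Fintype.piFinset fun _ => Finset.Icc 0 ((ℓ : ℤ) - 1)

/-- The uniform probability measure `p_ℓ` on `Λ_ℓ`. -/
noncomputable def punif (d ℓ : ℕ) (z : Fin d → ℤ) : ℝ :=
  if z ∈ Lam d ℓ then ((ℓ : ℝ) ^ d)⁻¹ else 0

/-- The convolution `q_ℓ = p_ℓ ∗ p_ℓ` (`p_ℓ` vanishes outside `Λ_ℓ`, so the sum is finite). -/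
noncomputable def qconv (d ℓ : ℕ) (z : Fin d → ℤ) : ℝ :=
  ∑ y ∈ Lam d ℓ, punif d ℓ y * punif d ℓ (z - y)

/-- The point mass at the origin of `ℤ^d`. -/
def delta0 (d : ℕ) (z : Fin d → ℤ) : ℝ := if z = 0 then 1 else 0

/-- The support of the flow `φ` is contained in `Λ`. -/
def SupportedIn (d : ℕ) (φ : (Fin d → ℤ) → Fin d → ℝ) (Λ : Finset (Fin d → ℤ)) : Prop :=
  ∀ z i, φ z i ≠ 0 → z ∈ Λ ∧ z + eZ d i ∈ Λ

/-- The flow `φ` connects `p` to `q`: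
`p(z) - q(z) = Σ_b (φ(z;b) - φ(z-b;b))` for every `z ∈ ℤ^d`. -/
def Connects (d : ℕ) (φ : (Fin d → ℤ) → Fin d → ℝ) (p q : (Fin d → ℤ) → ℝ) : Prop :=
  ∀ z, p z - q z = ∑ i : Fin d, (φ z i - φ (z - eZ d i) i)

/-- `g_d(ℓ) = ℓ` if `d = 1`, `log ℓ` if `d = 2`, `1` if `d ≥ 3`. -/
noncomputable def gd (d ℓ : ℕ) : ℝ := if d = 1 then (ℓ : ℝ) else if d = 2 then Real.log ℓ else 1

/-- Lemma I.2: there is `C = C(d)` such that for every `ℓ ∈ ℕ` there is a flow `ψ̃^ℓ`,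
supported in `Λ_ℓ`, connecting the point mass at the origin to the uniform measure `p_ℓ`,
with `Σ_{x∈Λ_ℓ,b} ψ̃^ℓ(x;b)² ≤ C g_d(ℓ)` and `Σ_{x∈Λ_ℓ,b} |ψ̃^ℓ(x;b)| ≤ C ℓ`. -/
noncomputable def uu (n : ℕ) (t : ℤ) : ℝ :=
  if t ∈ Finset.Icc (0:ℤ) ((n:ℤ) - 1) then (n : ℝ)⁻¹ else 0

noncomputable def Fc (L M : ℕ) (t : ℤ) : ℝ :=
  ∑ s ∈ Finset.Icc (0:ℤ) t, (uu L s - uu M s)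

lemma uu_nonneg (n : ℕ) (t : ℤ) : 0 ≤ uu n t := by
  unfold uu; split <;> positivity

lemma uu_le_inv (n : ℕ) (t : ℤ) : uu n t ≤ (n : ℝ)⁻¹ := by
  unfold uu; split
  · exact le_rfl
  · positivity

lemma uu_ne_zero {n : ℕ} {t : ℤ} (h : uu n t ≠ 0) : 0 ≤ t ∧ t ≤ (n:ℤ) - 1 := by
  unfold uu at h
  split at h
  · next hmem => exact Finset.mem_Icc.mp hmem
  · exact absurd rfl h

lemma sum_uu_Icc (n : ℕ) (t : ℤ) :
    ∑ s ∈ Finset.Icc (0:ℤ) t, uu n s = ((min (t+1) (n:ℤ)).toNat : ℝ) * (n : ℝ)⁻¹ := by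
  unfold uu
  rw [Finset.sum_ite_mem]
  have hI : Finset.Icc (0:ℤ) t ∩ Finset.Icc 0 ((n:ℤ)-1) = Finset.Icc 0 (min t ((n:ℤ)-1)) := by
    ext x; simp only [Finset.mem_inter, Finset.mem_Icc]; omega
  rw [hI, Finset.sum_const, nsmul_eq_mul, Int.card_Icc]
  congr 2
  omega

lemma sum_uu_one {n ℓ : ℕ} (h1 : 1 ≤ n) (h2 : n ≤ ℓ) :
    ∑ t ∈ Finset.Icc (0:ℤ) ((ℓ:ℤ) - 1), uu n t = 1 := by
  rw [sum_uu_Icc]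
  have : min ((ℓ:ℤ) - 1 + 1) (n:ℤ) = (n:ℤ) := by omega
  rw [this]
  rw [Int.toNat_natCast]
  field_simp

lemma Fc_eq (L M : ℕ) (t : ℤ) :
    Fc L M t = ((min (t+1) (L:ℤ)).toNat : ℝ) * (L:ℝ)⁻¹ - ((min (t+1) (M:ℤ)).toNat : ℝ) * (M:ℝ)⁻¹ := by
  unfold Fc
  rw [Finset.sum_sub_distrib, sum_uu_Icc, sum_uu_Icc]

lemma Fc_nonneg {L M : ℕ} (hL : 1 ≤ L) (hLM : L ≤ M) (t : ℤ) : 0 ≤ Fc L M t := by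
  rw [Fc_eq]
  have hM : 1 ≤ M := hL.trans hLM
  have hMpos : (0:ℝ) < M := by exact_mod_cast hM
  have hLpos : (0:ℝ) < L := by exact_mod_cast hL
  rcases le_or_gt (t+1) (L:ℤ) with h | h
  · have h1 : min (t+1) (L:ℤ) = t+1 := by omega
    have h2 : min (t+1) (M:ℤ) = t+1 := by omega
    rw [h1, h2]
    have hinv : (M:ℝ)⁻¹ ≤ (L:ℝ)⁻¹ := by
      apply inv_anti₀ hLpos
      exact_mod_cast hLM
    nlinarith [(show (0:ℝ) ≤ ((t+1).toNat : ℝ) by positivity)]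
  · have h1 : min (t+1) (L:ℤ) = (L:ℤ) := by
      have : (L:ℤ) ≤ t + 1 := by omega
      omega
    rw [h1, Int.toNat_natCast]
    have hLeq : ((L:ℕ):ℝ) * (L:ℝ)⁻¹ = 1 := by
      field_simp
    rw [hLeq]
    have hle : ((min (t+1) (M:ℤ)).toNat : ℝ) ≤ (M:ℝ) := by
      have : (min (t+1) (M:ℤ)).toNat ≤ M := by omega
      exact_mod_cast this
    have : ((min (t+1) (M:ℤ)).toNat : ℝ) * (M:ℝ)⁻¹ ≤ (M:ℝ) * (M:ℝ)⁻¹ :=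
      mul_le_mul_of_nonneg_right hle (by positivity)
    have hone : (M:ℝ) * (M:ℝ)⁻¹ = 1 := by field_simp
    linarith

lemma Fc_le_one {L M : ℕ} (hL : 1 ≤ L) (t : ℤ) : Fc L M t ≤ 1 := by
  rw [Fc_eq]
  have hLpos : (0:ℝ) < L := by positivity
  have h1 : ((min (t+1) (L:ℤ)).toNat : ℝ) ≤ (L:ℝ) := by
    have : (min (t+1) (L:ℤ)).toNat ≤ L := by omega
    exact_mod_cast this
  have h2 : (0:ℝ) ≤ ((min (t+1) (M:ℤ)).toNat : ℝ) * (M:ℝ)⁻¹ := by positivity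
  calc ((min (t+1) (L:ℤ)).toNat : ℝ) * (L:ℝ)⁻¹ - ((min (t+1) (M:ℤ)).toNat : ℝ) * (M:ℝ)⁻¹
      ≤ ((min (t+1) (L:ℤ)).toNat : ℝ) * (L:ℝ)⁻¹ := by linarith
    _ ≤ (L:ℝ) * (L:ℝ)⁻¹ := mul_le_mul_of_nonneg_right h1 (by positivity)
    _ = 1 := by field_simp

lemma Fc_eq_zero {L M : ℕ} (hL : 1 ≤ L) (hLM : L ≤ M) {t : ℤ}
    (h : t ∉ Finset.Icc (0:ℤ) ((M:ℤ) - 2)) : Fc L M t = 0 := by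
  simp only [Finset.mem_Icc, not_and_or, not_le] at h
  rcases h with h | h
  · unfold Fc
    rw [Finset.Icc_eq_empty (by omega), Finset.sum_empty]
  · rw [Fc_eq]
    have h1 : min (t+1) (L:ℤ) = (L:ℤ) := by omega
    have h2 : min (t+1) (M:ℤ) = (M:ℤ) := by omega
    rw [h1, h2, Int.toNat_natCast, Int.toNat_natCast]
    have hM : 1 ≤ M := le_trans hL hLM
    field_simp
    norm_num

lemma Fc_sub (L M : ℕ) (t : ℤ) : Fc L M t - Fc L M (t-1) = uu L t - uu M t := by
  rcases le_or_gt 0 t with h | h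
  · have hins : Finset.Icc (0:ℤ) t = insert t (Finset.Icc 0 (t-1)) := by
      ext x; simp only [Finset.mem_Icc, Finset.mem_insert]; omega
    unfold Fc
    rw [hins, Finset.sum_insert (by simp only [Finset.mem_Icc]; omega)]
    ring
  · have e1 : Finset.Icc (0:ℤ) t = ∅ := Finset.Icc_eq_empty (by omega)
    have e2 : Finset.Icc (0:ℤ) (t-1) = ∅ := Finset.Icc_eq_empty (by omega)
    have u1 : uu L t = 0 := by
      unfold uu; rw [if_neg]; simp only [Finset.mem_Icc]; omega
    have u2 : uu M t = 0 := by
      unfold uu; rw [if_neg]; simp only [Finset.mem_Icc]; omega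
    unfold Fc
    rw [e1, e2, u1, u2, Finset.sum_empty]
/-- side length at stage `k` -/
def aseq (ℓ k : ℕ) : ℕ := min (2^k) ℓ

/-- length vector during stage `k`, when the first `i` coordinates were already stretched -/
def nvec (d ℓ k : ℕ) (i : ℕ) : Fin d → ℕ :=
  fun m => if (m:ℕ) < i then aseq ℓ (k+1) else aseq ℓ k

/-- product measure with side lengths `n` -/
noncomputable def Pm (d : ℕ) (n : Fin d → ℕ) (z : Fin d → ℤ) : ℝ := ∏ m, uu (n m) (z m)

/-- stage-`k`, coordinate-`j` flow component -/
noncomputable def gflow (d ℓ k : ℕ) (j : Fin d) (z : Fin d → ℤ) : ℝ :=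
  Fc (aseq ℓ k) (aseq ℓ (k+1)) (z j) *
    ∏ m ∈ Finset.univ.erase j, uu (nvec d ℓ k (j:ℕ) m) (z m)

/-- the total flow -/
noncomputable def psiflow (d ℓ T : ℕ) (z : Fin d → ℤ) (j : Fin d) : ℝ :=
  ∑ k ∈ Finset.range T, gflow d ℓ k j z

lemma aseq_pos {ℓ : ℕ} (hℓ : 1 ≤ ℓ) (k : ℕ) : 1 ≤ aseq ℓ k :=
  le_min (Nat.one_le_two_pow) hℓ

lemma aseq_le (ℓ k : ℕ) : aseq ℓ k ≤ ℓ := min_le_right _ _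

lemma aseq_mono (ℓ k : ℕ) : aseq ℓ k ≤ aseq ℓ (k+1) :=
  min_le_min (Nat.pow_le_pow_right (by norm_num) (Nat.le_succ k)) le_rfl

lemma aseq_eq_pow {ℓ k : ℕ} (hℓ : 1 ≤ ℓ) (hk : k ≤ Nat.log 2 ℓ) : aseq ℓ k = 2^k := by
  apply min_eq_left
  calc 2^k ≤ 2^(Nat.log 2 ℓ) := Nat.pow_le_pow_right (by norm_num) hk
    _ ≤ ℓ := Nat.pow_log_le_self 2 (by omega)

lemma aseq_top {ℓ : ℕ} (hℓ : 1 ≤ ℓ) : aseq ℓ (Nat.log 2 ℓ + 1) = ℓ := by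
  apply min_eq_right
  exact le_of_lt (Nat.lt_pow_succ_log_self (by norm_num) ℓ)

lemma nvec_pos {d ℓ k i : ℕ} (hℓ : 1 ≤ ℓ) (m : Fin d) : 1 ≤ nvec d ℓ k i m := by
  unfold nvec; split <;> exact aseq_pos hℓ _

lemma nvec_le (d ℓ k i : ℕ) (m : Fin d) : nvec d ℓ k i m ≤ ℓ := by
  unfold nvec; split <;> exact aseq_le _ _

lemma aseq_le_nvec (d ℓ k i : ℕ) (m : Fin d) : aseq ℓ k ≤ nvec d ℓ k i m := by
  unfold nvec; split
  · exact aseq_mono ℓ k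
  · exact le_rfl

/-- the step identity -/
lemma step_eq (d ℓ k : ℕ) (j : Fin d) (z : Fin d → ℤ) :
    gflow d ℓ k j z - gflow d ℓ k j (z - eZ d j) =
      Pm d (nvec d ℓ k (j:ℕ)) z - Pm d (nvec d ℓ k ((j:ℕ)+1)) z := by
  have hcoord : ∀ m ∈ Finset.univ.erase j, (z - eZ d j) m = z m := by
    intro m hm
    have hmj : m ≠ j := Finset.ne_of_mem_erase hm
    simp [eZ, hmj]
  have hjz : (z - eZ d j) j = z j - 1 := by simp [eZ]
  have hprod : ∏ m ∈ Finset.univ.erase j, uu (nvec d ℓ k (j:ℕ) m) ((z - eZ d j) m)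
      = ∏ m ∈ Finset.univ.erase j, uu (nvec d ℓ k (j:ℕ) m) (z m) :=
    Finset.prod_congr rfl (fun m hm => by rw [hcoord m hm])
  have lhs : gflow d ℓ k j z - gflow d ℓ k j (z - eZ d j)
      = (uu (aseq ℓ k) (z j) - uu (aseq ℓ (k+1)) (z j)) *
        ∏ m ∈ Finset.univ.erase j, uu (nvec d ℓ k (j:ℕ) m) (z m) := by
    unfold gflow
    rw [hprod, hjz, ← sub_mul, Fc_sub]
  rw [lhs]
  unfold Pm
  have e1 : ∏ m, uu (nvec d ℓ k (j:ℕ) m) (z m)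
      = uu (aseq ℓ k) (z j) * ∏ m ∈ Finset.univ.erase j, uu (nvec d ℓ k (j:ℕ) m) (z m) := by
    rw [← Finset.mul_prod_erase Finset.univ _ (Finset.mem_univ j)]
    congr 1
    unfold nvec
    rw [if_neg (lt_irrefl _)]
  have e2 : ∏ m, uu (nvec d ℓ k ((j:ℕ)+1) m) (z m)
      = uu (aseq ℓ (k+1)) (z j) * ∏ m ∈ Finset.univ.erase j, uu (nvec d ℓ k (j:ℕ) m) (z m) := by
    rw [← Finset.mul_prod_erase Finset.univ _ (Finset.mem_univ j)]
    congr 1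
    · unfold nvec
      rw [if_pos (Nat.lt_succ_self _)]
    · apply Finset.prod_congr rfl
      intro m hm
      have hmj : m ≠ j := Finset.ne_of_mem_erase hm
      have : ((m:ℕ) < (j:ℕ)+1) ↔ ((m:ℕ) < (j:ℕ)) := by
        constructor
        · intro h
          have : (m:ℕ) ≠ (j:ℕ) := fun hc => hmj (Fin.ext hc)
          omega
        · intro h; omega
      unfold nvec
      by_cases hc : (m:ℕ) < (j:ℕ)
      · rw [if_pos hc, if_pos (this.mpr hc)]
      · rw [if_neg hc, if_neg (fun h => hc (this.mp h))]
  rw [e1, e2]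
  ring

lemma Pm_nvec_zero (d ℓ k : ℕ) (z : Fin d → ℤ) :
    Pm d (nvec d ℓ k 0) z = Pm d (fun _ => aseq ℓ k) z := by
  unfold Pm
  apply Finset.prod_congr rfl
  intro m _
  congr 1

lemma Pm_nvec_top (d ℓ k : ℕ) (z : Fin d → ℤ) :
    Pm d (nvec d ℓ k d) z = Pm d (fun _ => aseq ℓ (k+1)) z := by
  unfold Pm
  apply Finset.prod_congr rfl
  intro m _
  congr 1
  unfold nvec
  rw [if_pos m.isLt]

lemma Pm_one (d : ℕ) (z : Fin d → ℤ) : Pm d (fun _ => 1) z = delta0 d z := by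
  have huu : ∀ t : ℤ, uu 1 t = if t = 0 then 1 else 0 := by
    intro t
    unfold uu
    by_cases h : t = 0
    · rw [if_pos h, if_pos (by simp [h])]
      norm_num
    · rw [if_neg h, if_neg (by simp only [Finset.mem_Icc]; omega)]
  unfold Pm delta0
  by_cases hz : z = 0
  · rw [if_pos hz]
    apply Finset.prod_eq_one
    intro m _
    rw [huu, if_pos (by rw [hz]; rfl)]
  · rw [if_neg hz]
    obtain ⟨m, hm⟩ : ∃ m, z m ≠ 0 := by
      by_contra hc
      push_neg at hc
      exact hz (funext hc)
    apply Finset.prod_eq_zero (Finset.mem_univ m)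
    rw [huu, if_neg hm]

lemma Pm_ell (d ℓ : ℕ) (z : Fin d → ℤ) : Pm d (fun _ => ℓ) z = punif d ℓ z := by
  unfold Pm punif
  by_cases hz : z ∈ Lam d ℓ
  · rw [if_pos hz]
    have hmem : ∀ m, z m ∈ Finset.Icc (0:ℤ) ((ℓ:ℤ)-1) := by
      intro m
      exact Fintype.mem_piFinset.mp hz m
    have : ∀ m : Fin d, uu ℓ (z m) = (ℓ:ℝ)⁻¹ := by
      intro m; unfold uu; rw [if_pos (hmem m)]
    rw [Finset.prod_congr rfl (fun m _ => this m), Finset.prod_const, Finset.card_univ,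
      Fintype.card_fin, ← inv_pow]
  · rw [if_neg hz]
    obtain ⟨m, hm⟩ : ∃ m, z m ∉ Finset.Icc (0:ℤ) ((ℓ:ℤ)-1) := by
      by_contra hc
      push_neg at hc
      exact hz (Fintype.mem_piFinset.mpr hc)
    apply Finset.prod_eq_zero (Finset.mem_univ m)
    unfold uu
    rw [if_neg hm]

lemma psiflow_connects (d ℓ : ℕ) (hℓ : 1 ≤ ℓ) :
    Connects d (psiflow d ℓ (Nat.log 2 ℓ + 1)) (delta0 d) (punif d ℓ) := by
  intro z
  set T := Nat.log 2 ℓ + 1 with hT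
  have hstep : ∀ j : Fin d,
      psiflow d ℓ T z j - psiflow d ℓ T (z - eZ d j) j
        = ∑ k ∈ Finset.range T, (Pm d (nvec d ℓ k (j:ℕ)) z - Pm d (nvec d ℓ k ((j:ℕ)+1)) z) := by
    intro j
    unfold psiflow
    rw [← Finset.sum_sub_distrib]
    exact Finset.sum_congr rfl (fun k _ => step_eq d ℓ k j z)
  calc delta0 d z - punif d ℓ z
      = Pm d (fun _ => aseq ℓ 0) z - Pm d (fun _ => aseq ℓ T) z := by
        have h0 : aseq ℓ 0 = 1 := by unfold aseq; simpa using hℓ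
        have hTop : aseq ℓ T = ℓ := aseq_top hℓ
        rw [h0, hTop, Pm_one, Pm_ell]
    _ = ∑ k ∈ Finset.range T, (Pm d (fun _ => aseq ℓ k) z - Pm d (fun _ => aseq ℓ (k+1)) z) := by
        rw [Finset.sum_range_sub' (fun k => Pm d (fun _ => aseq ℓ k) z) T]
    _ = ∑ k ∈ Finset.range T, (Pm d (nvec d ℓ k 0) z - Pm d (nvec d ℓ k d) z) := by
        apply Finset.sum_congr rfl
        intro k _
        rw [Pm_nvec_zero, Pm_nvec_top]
    _ = ∑ k ∈ Finset.range T, ∑ j ∈ Finset.range d,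
          (Pm d (nvec d ℓ k j) z - Pm d (nvec d ℓ k (j+1)) z) := by
        apply Finset.sum_congr rfl
        intro k _
        rw [Finset.sum_range_sub' (fun j => Pm d (nvec d ℓ k j) z) d]
    _ = ∑ k ∈ Finset.range T, ∑ j : Fin d,
          (Pm d (nvec d ℓ k (j:ℕ)) z - Pm d (nvec d ℓ k ((j:ℕ)+1)) z) := by
        apply Finset.sum_congr rfl
        intro k _
        rw [Fin.sum_univ_eq_sum_range (fun j => Pm d (nvec d ℓ k j) z - Pm d (nvec d ℓ k (j+1)) z) d]
    _ = ∑ j : Fin d, ∑ k ∈ Finset.range T,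
          (Pm d (nvec d ℓ k (j:ℕ)) z - Pm d (nvec d ℓ k ((j:ℕ)+1)) z) := Finset.sum_comm
    _ = ∑ j : Fin d, (psiflow d ℓ T z j - psiflow d ℓ T (z - eZ d j) j) := by
        apply Finset.sum_congr rfl
        intro j _
        rw [hstep j]

/-! ### Support -/

lemma psiflow_supported (d ℓ : ℕ) (hℓ : 1 ≤ ℓ) :
    SupportedIn d (psiflow d ℓ (Nat.log 2 ℓ + 1)) (Lam d ℓ) := by
  intro z j hne
  obtain ⟨k, _, hgk⟩ := Finset.exists_ne_zero_of_sum_ne_zero hne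
  have hF : Fc (aseq ℓ k) (aseq ℓ (k+1)) (z j) ≠ 0 := by
    intro h
    apply hgk
    unfold gflow
    rw [h, zero_mul]
  have hprodm : ∀ m ∈ Finset.univ.erase j, uu (nvec d ℓ k (j:ℕ) m) (z m) ≠ 0 := by
    intro m hm hu
    apply hgk
    unfold gflow
    rw [Finset.prod_eq_zero hm hu, mul_zero]
  have hFz : z j ∈ Finset.Icc (0:ℤ) ((aseq ℓ (k+1):ℤ) - 2) := by
    by_contra hc
    exact hF (Fc_eq_zero (aseq_pos hℓ k) (aseq_mono ℓ k) hc)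
  have hjb : 0 ≤ z j ∧ z j ≤ (ℓ:ℤ) - 2 := by
    have := Finset.mem_Icc.mp hFz
    have hM := aseq_le ℓ (k+1)
    constructor
    · exact this.1
    · have : z j ≤ (aseq ℓ (k+1):ℤ) - 2 := this.2
      have : (aseq ℓ (k+1):ℤ) ≤ (ℓ:ℤ) := by exact_mod_cast hM
      omega
  have hmb : ∀ m : Fin d, m ≠ j → 0 ≤ z m ∧ z m ≤ (ℓ:ℤ) - 1 := by
    intro m hmj
    have hm : m ∈ Finset.univ.erase j := Finset.mem_erase.mpr ⟨hmj, Finset.mem_univ m⟩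
    have := uu_ne_zero (hprodm m hm)
    have hle : (nvec d ℓ k (j:ℕ) m : ℤ) ≤ (ℓ:ℤ) := by exact_mod_cast nvec_le d ℓ k (j:ℕ) m
    omega
  constructor
  · apply Fintype.mem_piFinset.mpr
    intro m
    rw [Finset.mem_Icc]
    by_cases hmj : m = j
    · subst hmj; omega
    · exact hmb m hmj
  · apply Fintype.mem_piFinset.mpr
    intro m
    rw [Finset.mem_Icc]
    by_cases hmj : m = j
    · subst hmj
      simp only [Pi.add_apply, eZ, if_pos rfl]
      omega
    · have : (z + eZ d j) m = z m := by simp [eZ, hmj]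
      rw [this]
      exact hmb m hmj

/-! ### nonnegativity -/

lemma gflow_nonneg (d ℓ k : ℕ) (hℓ : 1 ≤ ℓ) (j : Fin d) (z : Fin d → ℤ) :
    0 ≤ gflow d ℓ k j z := by
  unfold gflow
  apply mul_nonneg
  · exact Fc_nonneg (aseq_pos hℓ k) (aseq_mono ℓ k) _
  · exact Finset.prod_nonneg fun m _ => uu_nonneg _ _

lemma psiflow_nonneg (d ℓ T : ℕ) (hℓ : 1 ≤ ℓ) (z : Fin d → ℤ) (j : Fin d) :
    0 ≤ psiflow d ℓ T z j :=
  Finset.sum_nonneg fun k _ => gflow_nonneg d ℓ k hℓ j z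

/-! ### ℓ¹ bound for a single stage -/

lemma sum_Fc_le (L M ℓ : ℕ) (hL : 1 ≤ L) (hLM : L ≤ M) :
    ∑ t ∈ Finset.Icc (0:ℤ) ((ℓ:ℤ)-1), Fc L M t ≤ (M:ℝ) - 1 := by
  have hM : 1 ≤ M := hL.trans hLM
  calc ∑ t ∈ Finset.Icc (0:ℤ) ((ℓ:ℤ)-1), Fc L M t
      ≤ ∑ t ∈ Finset.Icc (0:ℤ) ((ℓ:ℤ)-1),
          (if t ∈ Finset.Icc (0:ℤ) ((M:ℤ)-2) then (1:ℝ) else 0) := by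
        apply Finset.sum_le_sum
        intro t _
        by_cases hm : t ∈ Finset.Icc (0:ℤ) ((M:ℤ)-2)
        · rw [if_pos hm]; exact Fc_le_one hL t
        · rw [if_neg hm, Fc_eq_zero hL hLM hm]
    _ = ((Finset.Icc (0:ℤ) ((ℓ:ℤ)-1) ∩ Finset.Icc 0 ((M:ℤ)-2)).card : ℝ) := by
        rw [Finset.sum_ite_mem, Finset.sum_const, nsmul_eq_mul, mul_one]
    _ ≤ ((Finset.Icc (0:ℤ) ((M:ℤ)-2)).card : ℝ) := by
        have h := Finset.card_le_card
          (Finset.inter_subset_right :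
            Finset.Icc (0:ℤ) ((ℓ:ℤ)-1) ∩ Finset.Icc 0 ((M:ℤ)-2) ⊆ Finset.Icc 0 ((M:ℤ)-2))
        exact_mod_cast h
    _ ≤ (M:ℝ) - 1 := by
        rw [Int.card_Icc]
        have h1 : ((M:ℤ) - 2 + 1 - 0).toNat = M - 1 := by omega
        rw [h1]
        have : ((M - 1 : ℕ) : ℝ) = (M:ℝ) - 1 := by
          push_cast [Nat.cast_sub hM]
          ring
        rw [this]

lemma sum_gflow_le (d ℓ k : ℕ) (hℓ : 1 ≤ ℓ) (j : Fin d) :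
    ∑ z ∈ Lam d ℓ, gflow d ℓ k j z ≤ (2:ℝ)^(k+1) := by
  set L := aseq ℓ k
  set M := aseq ℓ (k+1)
  have hL : 1 ≤ L := aseq_pos hℓ k
  have hLM : L ≤ M := aseq_mono ℓ k
  set h : Fin d → ℤ → ℝ := fun m t => if m = j then Fc L M t else uu (nvec d ℓ k (j:ℕ) m) t
    with hh
  have hgf : ∀ z : Fin d → ℤ, gflow d ℓ k j z = ∏ m, h m (z m) := by
    intro z
    rw [← Finset.mul_prod_erase Finset.univ (fun m => h m (z m)) (Finset.mem_univ j)]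
    unfold gflow
    congr 1
    · rw [hh]; simp; rfl
    · apply Finset.prod_congr rfl
      intro m hm
      rw [hh]
      simp only
      rw [if_neg (Finset.ne_of_mem_erase hm)]
  calc ∑ z ∈ Lam d ℓ, gflow d ℓ k j z
      = ∑ z ∈ Lam d ℓ, ∏ m, h m (z m) := Finset.sum_congr rfl fun z _ => hgf z
    _ = ∏ m, ∑ t ∈ Finset.Icc (0:ℤ) ((ℓ:ℤ)-1), h m t := by
        exact Finset.sum_prod_piFinset _ _
    _ = (∑ t ∈ Finset.Icc (0:ℤ) ((ℓ:ℤ)-1), Fc L M t) *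
          ∏ m ∈ Finset.univ.erase j, ∑ t ∈ Finset.Icc (0:ℤ) ((ℓ:ℤ)-1),
            uu (nvec d ℓ k (j:ℕ) m) t := by
        rw [← Finset.mul_prod_erase Finset.univ _ (Finset.mem_univ j)]
        congr 1
        · apply Finset.sum_congr rfl
          intro t _
          rw [hh]; simp
        · apply Finset.prod_congr rfl
          intro m hm
          apply Finset.sum_congr rfl
          intro t _
          rw [hh]
          simp only
          rw [if_neg (Finset.ne_of_mem_erase hm)]
    _ = ∑ t ∈ Finset.Icc (0:ℤ) ((ℓ:ℤ)-1), Fc L M t := by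
        rw [Finset.prod_congr rfl (fun m _ => sum_uu_one (nvec_pos hℓ m) (nvec_le d ℓ k (j:ℕ) m)),
          Finset.prod_const_one, mul_one]
    _ ≤ (M:ℝ) - 1 := sum_Fc_le L M ℓ hL hLM
    _ ≤ (2:ℝ)^(k+1) := by
        have : (M:ℝ) ≤ (2:ℝ)^(k+1) := by
          have : M ≤ 2^(k+1) := min_le_left _ _
          exact_mod_cast this
        linarith

/-! ### ℓ^∞ bound for a single stage -/

lemma gflow_le_inf (d ℓ k : ℕ) (hℓ : 1 ≤ ℓ) (hk : k ≤ Nat.log 2 ℓ) (j : Fin d) (z : Fin d → ℤ) :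
    gflow d ℓ k j z ≤ ((2:ℝ)^((d-1)*k))⁻¹ := by
  have hak : aseq ℓ k = 2^k := aseq_eq_pow hℓ hk
  have hcard : (Finset.univ.erase j).card = d - 1 := by
    rw [Finset.card_erase_of_mem (Finset.mem_univ j), Finset.card_univ, Fintype.card_fin]
  have hprod : ∏ m ∈ Finset.univ.erase j, uu (nvec d ℓ k (j:ℕ) m) (z m)
      ≤ ((2:ℝ)^k)⁻¹ ^ (d-1) := by
    rw [← hcard, ← Finset.prod_const]
    apply Finset.prod_le_prod
    · intro m _; exact uu_nonneg _ _
    · intro m _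
      calc uu (nvec d ℓ k (j:ℕ) m) (z m) ≤ ((nvec d ℓ k (j:ℕ) m : ℝ))⁻¹ := uu_le_inv _ _
        _ ≤ ((2:ℝ)^k)⁻¹ := by
            apply inv_anti₀
            · positivity
            · have h1 : 2^k ≤ nvec d ℓ k (j:ℕ) m := hak ▸ aseq_le_nvec d ℓ k (j:ℕ) m
              exact_mod_cast h1
  calc gflow d ℓ k j z
      ≤ 1 * (((2:ℝ)^k)⁻¹ ^ (d-1)) := by
        unfold gflow
        apply mul_le_mul (Fc_le_one (aseq_pos hℓ k) _) hprod
          (Finset.prod_nonneg fun m _ => uu_nonneg _ _) zero_le_one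
    _ = ((2:ℝ)^((d-1)*k))⁻¹ := by
        rw [one_mul, ← inv_pow, ← pow_mul, mul_comm k (d-1), inv_pow]

/-! ### cross term bound -/

lemma cross_le (d ℓ k k' : ℕ) (hℓ : 1 ≤ ℓ) (hk : k ≤ Nat.log 2 ℓ) (hk' : k' ≤ Nat.log 2 ℓ)
    (j : Fin d) :
    ∑ z ∈ Lam d ℓ, gflow d ℓ k j z * gflow d ℓ k' j z ≤
      (if k ≤ k' then (2:ℝ)^(k+1) * ((2:ℝ)^((d-1)*k'))⁻¹
       else (2:ℝ)^(k'+1) * ((2:ℝ)^((d-1)*k))⁻¹) := by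
  have key : ∀ a b : ℕ, a ≤ Nat.log 2 ℓ → b ≤ Nat.log 2 ℓ →
      ∑ z ∈ Lam d ℓ, gflow d ℓ a j z * gflow d ℓ b j z ≤
        (2:ℝ)^(a+1) * ((2:ℝ)^((d-1)*b))⁻¹ := by
    intro a b _ hb
    calc ∑ z ∈ Lam d ℓ, gflow d ℓ a j z * gflow d ℓ b j z
        ≤ ∑ z ∈ Lam d ℓ, gflow d ℓ a j z * ((2:ℝ)^((d-1)*b))⁻¹ := by
          apply Finset.sum_le_sum
          intro z _
          exact mul_le_mul_of_nonneg_left (gflow_le_inf d ℓ b hℓ hb j z)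
            (gflow_nonneg d ℓ a hℓ j z)
      _ = (∑ z ∈ Lam d ℓ, gflow d ℓ a j z) * ((2:ℝ)^((d-1)*b))⁻¹ := by
          rw [Finset.sum_mul]
      _ ≤ (2:ℝ)^(a+1) * ((2:ℝ)^((d-1)*b))⁻¹ := by
          apply mul_le_mul_of_nonneg_right (sum_gflow_le d ℓ a hℓ j) (by positivity)
  split
  · exact key k k' hk hk'
  · calc ∑ z ∈ Lam d ℓ, gflow d ℓ k j z * gflow d ℓ k' j z
        = ∑ z ∈ Lam d ℓ, gflow d ℓ k' j z * gflow d ℓ k j z := by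
          apply Finset.sum_congr rfl; intro z _; ring
      _ ≤ (2:ℝ)^(k'+1) * ((2:ℝ)^((d-1)*k))⁻¹ := key k' k hk' hk

/-! ### geometric sums -/

lemma geo2 (n : ℕ) : ∑ k ∈ Finset.range n, (2:ℝ)^(k+1) ≤ 2^(n+1) := by
  induction n with
  | zero => simp
  | succ n ih =>
    rw [Finset.sum_range_succ]
    have h : (2:ℝ)^(n+1) + 2^(n+1) = 2^(n+1+1) := by ring
    linarith

lemma geo_half (n : ℕ) : ∑ k ∈ Finset.range n, ((2:ℝ)^k)⁻¹ ≤ 2 := by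
  have h : ∀ k : ℕ, ((2:ℝ)^k)⁻¹ = (2⁻¹:ℝ)^k := fun k => by rw [inv_pow]
  rw [Finset.sum_congr rfl (fun k _ => h k)]
  rw [geom_sum_eq (by norm_num)]
  have h2 : (0:ℝ) ≤ (2⁻¹:ℝ)^n := by positivity
  have : ((2⁻¹:ℝ)^n - 1) / (2⁻¹ - 1) = 2 * (1 - (2⁻¹:ℝ)^n) := by ring
  rw [this]
  nlinarith

/-! ### energy master bound -/

lemma energy_le (d ℓ : ℕ) (hℓ : 1 ≤ ℓ) :
    ∑ x ∈ Lam d ℓ, ∑ j : Fin d, (psiflow d ℓ (Nat.log 2 ℓ + 1) x j)^2 ≤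
      (d:ℝ) * (2 * ∑ k' ∈ Finset.range (Nat.log 2 ℓ + 1),
        (2:ℝ)^(k'+2) * ((2:ℝ)^((d-1)*k'))⁻¹) := by
  set T := Nat.log 2 ℓ + 1 with hT
  set D : ℕ → ℕ → ℝ := fun a b => if a ≤ b then (2:ℝ)^(a+1) * ((2:ℝ)^((d-1)*b))⁻¹ else 0
    with hD
  have hDnonneg : ∀ a b, 0 ≤ D a b := by
    intro a b; rw [hD]; dsimp only; split
    · positivity
    · exact le_rfl
  have hrange : ∀ k ∈ Finset.range T, k ≤ Nat.log 2 ℓ := fun k hk => by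
    have := Finset.mem_range.mp hk; omega
  have hinner : ∀ k' ∈ Finset.range T,
      ∑ k ∈ Finset.range T, D k k' ≤ (2:ℝ)^(k'+2) * ((2:ℝ)^((d-1)*k'))⁻¹ := by
    intro k' _
    have hc : (0:ℝ) ≤ ((2:ℝ)^((d-1)*k'))⁻¹ := by positivity
    calc ∑ k ∈ Finset.range T, D k k'
        = ∑ k ∈ (Finset.range T).filter (· ≤ k'),
            (2:ℝ)^(k+1) * ((2:ℝ)^((d-1)*k'))⁻¹ := by
          rw [Finset.sum_filter]
      _ ≤ ∑ k ∈ Finset.range (k'+1), (2:ℝ)^(k+1) * ((2:ℝ)^((d-1)*k'))⁻¹ := by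
          apply Finset.sum_le_sum_of_subset_of_nonneg
          · intro k hk
            simp only [Finset.mem_filter, Finset.mem_range] at hk ⊢
            omega
          · intro k _ _; positivity
      _ = (∑ k ∈ Finset.range (k'+1), (2:ℝ)^(k+1)) * ((2:ℝ)^((d-1)*k'))⁻¹ := by
          rw [Finset.sum_mul]
      _ ≤ (2:ℝ)^(k'+2) * ((2:ℝ)^((d-1)*k'))⁻¹ := by
          apply mul_le_mul_of_nonneg_right _ hc
          exact geo2 (k'+1)
  calc ∑ x ∈ Lam d ℓ, ∑ j : Fin d, (psiflow d ℓ T x j)^2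
      = ∑ j : Fin d, ∑ x ∈ Lam d ℓ, (psiflow d ℓ T x j)^2 := Finset.sum_comm
    _ = ∑ j : Fin d, ∑ k ∈ Finset.range T, ∑ k' ∈ Finset.range T,
          ∑ x ∈ Lam d ℓ, gflow d ℓ k j x * gflow d ℓ k' j x := by
        apply Finset.sum_congr rfl
        intro j _
        have hexp : ∀ x : Fin d → ℤ, (psiflow d ℓ T x j)^2
            = ∑ k ∈ Finset.range T, ∑ k' ∈ Finset.range T,
                gflow d ℓ k j x * gflow d ℓ k' j x := by
          intro x
          rw [sq]
          unfold psiflow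
          rw [Finset.sum_mul_sum]
        rw [Finset.sum_congr rfl (fun x _ => hexp x)]
        rw [Finset.sum_comm]
        apply Finset.sum_congr rfl
        intro k _
        rw [Finset.sum_comm]
    _ ≤ ∑ j : Fin d, ∑ k ∈ Finset.range T, ∑ k' ∈ Finset.range T, (D k k' + D k' k) := by
        apply Finset.sum_le_sum
        intro j _
        apply Finset.sum_le_sum
        intro k hk
        apply Finset.sum_le_sum
        intro k' hk'
        have hcross := cross_le d ℓ k k' hℓ (hrange k hk) (hrange k' hk') j
        rw [hD]
        dsimp only
        by_cases h : k ≤ k'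
        · rw [if_pos h] at hcross ⊢
          have := hDnonneg k' k
          rw [hD] at this
          dsimp only at this
          linarith
        · rw [if_neg h] at hcross ⊢
          have hle : k' ≤ k := by omega
          rw [if_pos hle]
          linarith
    _ = ∑ j : Fin d, (2 * ∑ k' ∈ Finset.range T, ∑ k ∈ Finset.range T, D k k') := by
        apply Finset.sum_congr rfl
        intro j _
        rw [Finset.sum_congr rfl (fun k _ => Finset.sum_add_distrib),
          Finset.sum_add_distrib, two_mul]
        congr 1
        exact Finset.sum_comm
    _ ≤ ∑ j : Fin d, (2 * ∑ k' ∈ Finset.range T, (2:ℝ)^(k'+2) * ((2:ℝ)^((d-1)*k'))⁻¹) := by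
        apply Finset.sum_le_sum
        intro j _
        have := Finset.sum_le_sum hinner
        linarith
    _ = (d:ℝ) * (2 * ∑ k' ∈ Finset.range T, (2:ℝ)^(k'+2) * ((2:ℝ)^((d-1)*k'))⁻¹) := by
        rw [Finset.sum_const, Finset.card_univ, Fintype.card_fin, nsmul_eq_mul]

/-! ### ℓ¹ master bound -/

lemma l1_le (d ℓ : ℕ) (hℓ : 1 ≤ ℓ) :
    ∑ x ∈ Lam d ℓ, ∑ j : Fin d, |psiflow d ℓ (Nat.log 2 ℓ + 1) x j| ≤ (d:ℝ) * (4 * ℓ) := by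
  set T := Nat.log 2 ℓ + 1 with hT
  have h2T : (2:ℝ)^(T+1) ≤ 4 * ℓ := by
    have h1 : 2^(Nat.log 2 ℓ) ≤ ℓ := Nat.pow_log_le_self 2 (by omega)
    have h2 : ((2:ℝ))^(Nat.log 2 ℓ) ≤ (ℓ:ℝ) := by exact_mod_cast h1
    have : (2:ℝ)^(T+1) = 4 * 2^(Nat.log 2 ℓ) := by rw [hT]; ring
    rw [this]
    linarith
  calc ∑ x ∈ Lam d ℓ, ∑ j : Fin d, |psiflow d ℓ T x j|
      = ∑ j : Fin d, ∑ x ∈ Lam d ℓ, psiflow d ℓ T x j := by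
        rw [Finset.sum_comm]
        apply Finset.sum_congr rfl
        intro j _
        apply Finset.sum_congr rfl
        intro x _
        exact abs_of_nonneg (psiflow_nonneg d ℓ T hℓ x j)
    _ = ∑ j : Fin d, ∑ k ∈ Finset.range T, ∑ x ∈ Lam d ℓ, gflow d ℓ k j x := by
        apply Finset.sum_congr rfl
        intro j _
        unfold psiflow
        rw [Finset.sum_comm]
    _ ≤ ∑ j : Fin d, ∑ k ∈ Finset.range T, (2:ℝ)^(k+1) := by
        apply Finset.sum_le_sum
        intro j _
        exact Finset.sum_le_sum (fun k _ => sum_gflow_le d ℓ k hℓ j)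
    _ ≤ ∑ j : Fin d, (2:ℝ)^(T+1) := Finset.sum_le_sum (fun j _ => geo2 T)
    _ = (d:ℝ) * (2:ℝ)^(T+1) := by
        rw [Finset.sum_const, Finset.card_univ, Fintype.card_fin, nsmul_eq_mul]
    _ ≤ (d:ℝ) * (4 * ℓ) := by
        apply mul_le_mul_of_nonneg_left h2T (by positivity)

/-! ### degenerate case ℓ = 1 -/

lemma psiflow_one (d T : ℕ) (z : Fin d → ℤ) (j : Fin d) : psiflow d 1 T z j = 0 := by
  unfold psiflow
  apply Finset.sum_eq_zero
  intro k _
  unfold gflow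
  have ha : ∀ m : ℕ, aseq 1 m = 1 := by
    intro m
    unfold aseq
    exact min_eq_right Nat.one_le_two_pow
  rw [ha k, ha (k+1)]
  have : Fc 1 1 (z j) = 0 := by
    unfold Fc
    apply Finset.sum_eq_zero
    intro s _
    ring
  rw [this, zero_mul]

theorem flow_to_uniform_lemma (d : ℕ) (hd : 1 ≤ d) :
    ∃ C : ℝ, 0 < C ∧ ∀ ℓ : ℕ, 1 ≤ ℓ →
      ∃ ψ : (Fin d → ℤ) → Fin d → ℝ,
        SupportedIn d ψ (Lam d ℓ) ∧
        Connects d ψ (delta0 d) (punif d ℓ) ∧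
        (∑ x ∈ Lam d ℓ, ∑ i : Fin d, (ψ x i) ^ 2) ≤ C * gd d ℓ ∧
        (∑ x ∈ Lam d ℓ, ∑ i : Fin d, |ψ x i|) ≤ C * ℓ := by
  have hdR : (1:ℝ) ≤ (d:ℝ) := by exact_mod_cast hd
  refine ⟨128 * d, by linarith, ?_⟩
  intro ℓ hℓ
  set T := Nat.log 2 ℓ + 1 with hT
  refine ⟨psiflow d ℓ T, psiflow_supported d ℓ hℓ, psiflow_connects d ℓ hℓ, ?_, ?_⟩
  · -- energy bound
    by_cases hℓ1 : ℓ = 1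
    · subst hℓ1
      have hzero : ∑ x ∈ Lam d 1, ∑ i : Fin d, (psiflow d 1 T x i)^2 = 0 := by
        apply Finset.sum_eq_zero
        intro x _
        apply Finset.sum_eq_zero
        intro i _
        rw [psiflow_one d T x i]
        ring
      rw [hzero]
      have hgd : 0 ≤ gd d 1 := by
        unfold gd
        split
        · norm_num
        · split
          · simp
          · norm_num
      have : (0:ℝ) ≤ 128 * d := by linarith
      positivity
    · have hℓ2 : 2 ≤ ℓ := by omega
      have hE := energy_le d ℓ hℓ
      have hlog1 : 1 ≤ Nat.log 2 ℓ := Nat.log_pos (by norm_num) hℓ2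
      have hpowlog : ((2:ℝ))^(Nat.log 2 ℓ) ≤ (ℓ:ℝ) := by
        exact_mod_cast Nat.pow_log_le_self 2 (by omega)
      by_cases hd1 : d = 1
      · subst hd1
        have hterm : ∀ k' : ℕ, (2:ℝ)^(k'+2) * ((2:ℝ)^((1-1)*k'))⁻¹ = 2 * (2:ℝ)^(k'+1) := by
          intro k'
          norm_num
          ring
        have hsum : ∑ k' ∈ Finset.range T, (2:ℝ)^(k'+2) * ((2:ℝ)^((1-1)*k'))⁻¹
            ≤ 2 * (2:ℝ)^(T+1) := by
          rw [Finset.sum_congr rfl (fun k' _ => hterm k'), ← Finset.mul_sum]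
          have := geo2 T
          linarith
        have hgd : gd 1 ℓ = (ℓ:ℝ) := by unfold gd; rw [if_pos rfl]
        rw [hgd]
        have h2T : (2:ℝ)^(T+1) = 4 * (2:ℝ)^(Nat.log 2 ℓ) := by rw [hT]; ring
        have : (2:ℝ)^(T+1) ≤ 4 * ℓ := by rw [h2T]; linarith
        calc ∑ x ∈ Lam 1 ℓ, ∑ i : Fin 1, (psiflow 1 ℓ T x i)^2
            ≤ (1:ℝ) * (2 * ∑ k' ∈ Finset.range T, (2:ℝ)^(k'+2) * ((2:ℝ)^((1-1)*k'))⁻¹) := by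
              exact_mod_cast hE
          _ ≤ (1:ℝ) * (2 * (2 * (2:ℝ)^(T+1))) := by nlinarith
          _ ≤ 128 * ((1:ℕ):ℝ) * (ℓ:ℝ) := by push_cast; nlinarith
      · by_cases hd2 : d = 2
        · subst hd2
          have hterm : ∀ k' : ℕ, (2:ℝ)^(k'+2) * ((2:ℝ)^((2-1)*k'))⁻¹ = 4 := by
            intro k'
            have h1 : (2:ℝ)^(k'+2) = (2:ℝ)^k' * 4 := by rw [pow_add]; norm_num
            have h2 : ((2:ℝ)^((2-1)*k')) = (2:ℝ)^k' := by norm_num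
            rw [h1, h2]
            have : ((2:ℝ)^k') ≠ 0 := by positivity
            field_simp
          have hsum : ∑ k' ∈ Finset.range T, (2:ℝ)^(k'+2) * ((2:ℝ)^((2-1)*k'))⁻¹ = 4 * T := by
            rw [Finset.sum_congr rfl (fun k' _ => hterm k'), Finset.sum_const,
              Finset.card_range, nsmul_eq_mul]
            ring
          have hgd : gd 2 ℓ = Real.log ℓ := by unfold gd; norm_num
          rw [hgd]
          -- (Nat.log 2 ℓ : ℝ) ≤ 2 log ℓ
          have hlog2 : (0.6931471803:ℝ) < Real.log 2 := Real.log_two_gt_d9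
          have hmono : Real.log ((2:ℝ)^(Nat.log 2 ℓ)) ≤ Real.log ℓ := by
            apply Real.log_le_log (by positivity) hpowlog
          rw [Real.log_pow] at hmono
          have hnatlog : (Nat.log 2 ℓ : ℝ) ≤ 2 * Real.log ℓ := by nlinarith
          have hTle : (T:ℝ) ≤ 2 * (Nat.log 2 ℓ : ℝ) := by
            rw [hT]
            push_cast
            have : (1:ℝ) ≤ (Nat.log 2 ℓ : ℝ) := by exact_mod_cast hlog1
            linarith
          have hlogpos : 0 ≤ Real.log ℓ := Real.log_nonneg (by exact_mod_cast hℓ)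
          calc ∑ x ∈ Lam 2 ℓ, ∑ i : Fin 2, (psiflow 2 ℓ T x i)^2
              ≤ (2:ℝ) * (2 * (4 * T)) := by
                have := hE
                rw [hsum] at this
                exact_mod_cast this
            _ = 16 * (T:ℝ) := by ring
            _ ≤ 16 * (2 * (2 * Real.log ℓ)) := by nlinarith
            _ ≤ 128 * 2 * Real.log ℓ := by nlinarith
        · have hd3 : 3 ≤ d := by omega
          have hgd : gd d ℓ = 1 := by unfold gd; rw [if_neg hd1, if_neg hd2]
          rw [hgd]
          have hterm : ∀ k' : ℕ, (2:ℝ)^(k'+2) * ((2:ℝ)^((d-1)*k'))⁻¹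
              ≤ 4 * ((2:ℝ)^k')⁻¹ := by
            intro k'
            have hexp : 2*k' ≤ (d-1)*k' := Nat.mul_le_mul_right k' (by omega)
            have hpow : (2:ℝ)^(2*k') ≤ (2:ℝ)^((d-1)*k') :=
              pow_le_pow_right₀ (by norm_num) hexp
            have hinv : ((2:ℝ)^((d-1)*k'))⁻¹ ≤ ((2:ℝ)^(2*k'))⁻¹ := by
              apply inv_anti₀ (by positivity) hpow
            have heq : (2:ℝ)^(k'+2) * ((2:ℝ)^(2*k'))⁻¹ = 4 * ((2:ℝ)^k')⁻¹ := by
              rw [pow_add, two_mul, pow_add]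
              have : ((2:ℝ)^k') ≠ 0 := by positivity
              field_simp
              ring
            calc (2:ℝ)^(k'+2) * ((2:ℝ)^((d-1)*k'))⁻¹
                ≤ (2:ℝ)^(k'+2) * ((2:ℝ)^(2*k'))⁻¹ :=
                  mul_le_mul_of_nonneg_left hinv (by positivity)
              _ = 4 * ((2:ℝ)^k')⁻¹ := heq
          have hsum : ∑ k' ∈ Finset.range T, (2:ℝ)^(k'+2) * ((2:ℝ)^((d-1)*k'))⁻¹ ≤ 8 := by
            calc ∑ k' ∈ Finset.range T, (2:ℝ)^(k'+2) * ((2:ℝ)^((d-1)*k'))⁻¹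
                ≤ ∑ k' ∈ Finset.range T, 4 * ((2:ℝ)^k')⁻¹ :=
                  Finset.sum_le_sum (fun k' _ => hterm k')
              _ = 4 * ∑ k' ∈ Finset.range T, ((2:ℝ)^k')⁻¹ := by rw [Finset.mul_sum]
              _ ≤ 4 * 2 := by
                  have := geo_half T
                  linarith
              _ = 8 := by norm_num
          calc ∑ x ∈ Lam d ℓ, ∑ i : Fin d, (psiflow d ℓ T x i)^2
              ≤ (d:ℝ) * (2 * ∑ k' ∈ Finset.range T, (2:ℝ)^(k'+2) * ((2:ℝ)^((d-1)*k'))⁻¹) :=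
                hE
            _ ≤ (d:ℝ) * (2 * 8) := by nlinarith
            _ ≤ 128 * (d:ℝ) * 1 := by nlinarith
  · -- ℓ¹ bound
    have := l1_le d ℓ hℓ
    have hℓR : (1:ℝ) ≤ (ℓ:ℝ) := by exact_mod_cast hℓ
    calc ∑ x ∈ Lam d ℓ, ∑ i : Fin d, |psiflow d ℓ T x i| ≤ (d:ℝ) * (4 * ℓ) := this
      _ ≤ 128 * (d:ℝ) * ℓ := by nlinarith
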